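/- If G is a finite connected Helly graph and x is a corner of G, then the induced subgraph G − x obtained by deleting x is again a finite connected Helly graph. -/

import Mathlib

/-- A graph is Helly if every nonempty, pairwise-intersecting family of balls
has a common point. -/
def IsHellyGraph {W : Type*} (H : SimpleGraph W) : Prop :=
  ∀ s : Set (W × ℕ), s.Nonempty →
    (∀ p ∈ s, ∀ q ∈ s, ∃ w, H.dist p.1 w ≤ p.2 ∧ H.dist q.1 w ≤ q.2) →
    ∃ w, ∀ p ∈ s, H.dist p.1 w ≤ p.2

/-- A vertex `x` is a corner of `G` if some neighbor `y` of `x`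
satisfies `N[x] ⊆ N[y]`. -/
def IsGraphCorner {W : Type*} (G : SimpleGraph W) (x : W) : Prop :=
  ∃ y, G.Adj x y ∧ insert x (G.neighborSet x) ⊆ insert y (G.neighborSet y)

open SimpleGraph

/-- Transfer a walk avoiding nothing in `G` to a walk in `G.induce {z | z ≠ x}`,
using the dominating vertex `y`. -/
lemma walk_transfer {V : Type*} (G : SimpleGraph V) (x y : V)
    (hxy : G.Adj x y)
    (hdom : insert x (G.neighborSet x) ⊆ insert y (G.neighborSet y)) :
    ∀ n (u v : V) (hu : u ≠ x) (hv : v ≠ x) (w : G.Walk u v), w.length ≤ n →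
      ∃ w' : (G.induce {z | z ≠ x}).Walk ⟨u, hu⟩ ⟨v, hv⟩, w'.length ≤ w.length := by
  intro n
  induction n with
  | zero =>
    intro u v hu hv w hw
    cases w with
    | nil => exact ⟨SimpleGraph.Walk.nil, le_rfl⟩
    | cons h p => simp at hw
  | succ n ih =>
    intro u v hu hv w hw
    cases w with
    | nil => exact ⟨SimpleGraph.Walk.nil, le_rfl⟩
    | @cons _ a _ h p =>
      by_cases hax : a = x
      · subst hax
        -- p : G.Walk a v with a = x, v ≠ x so p is a cons
        cases p with
        | nil => exact absurd rfl hv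
        | @cons _ b _ h' q =>
          have hb : b ≠ a := h'.ne'
          have hq : q.length ≤ n := by
            simp [SimpleGraph.Walk.length_cons] at hw; omega
          obtain ⟨q', hq'⟩ := ih b v hb hv q hq
          have huN : u ∈ insert y (G.neighborSet y) := hdom (by
            right; exact h.symm)
          have hbN : b ∈ insert y (G.neighborSet y) := hdom (by
            right; exact h')
          have hyx : y ≠ a := hxy.ne'
          by_cases hub : u = b
          · subst hub
            exact ⟨q', by simp [SimpleGraph.Walk.length_cons]; omega⟩
          · by_cases huy : u = y
            · -- u = y, so u adjacent to b (since b ∈ N[y], b ≠ y = u)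
              have hadj : G.Adj u b := by
                subst huy
                rcases hbN with hb' | hb'
                · exact absurd hb'.symm hub
                · exact hb'
              refine ⟨SimpleGraph.Walk.cons ?_ q', ?_⟩
              · exact hadj
              · change q'.length + 1 ≤ _
                simp [SimpleGraph.Walk.length_cons]; omega
            · have huy' : G.Adj y u := by
                rcases huN with h'' | h''
                · exact absurd h'' huy
                · exact h''
              by_cases hby : b = y
              · refine ⟨SimpleGraph.Walk.cons (v := (⟨b, hb⟩ : {z | z ≠ a})) ?_ q', ?_⟩
                · subst hby; exact huy'.symm
                · simp [SimpleGraph.Walk.length_cons]; omega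
              · have hby' : G.Adj y b := by
                  rcases hbN with h'' | h''
                  · exact absurd h'' hby
                  · exact h''
                refine ⟨SimpleGraph.Walk.cons (v := (⟨y, hyx⟩ : {z | z ≠ a}))
                  huy'.symm (SimpleGraph.Walk.cons (v := (⟨b, hb⟩ : {z | z ≠ a})) hby' q'), ?_⟩
                change q'.length + 1 + 1 ≤ _
                simp [SimpleGraph.Walk.length_cons]; omega
      · obtain ⟨p', hp'⟩ := ih a v hax hv p (by
          simp [SimpleGraph.Walk.length_cons] at hw; omega)
        exact ⟨SimpleGraph.Walk.cons (v := (⟨a, hax⟩ : {z | z ≠ x})) h p',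
          by change p'.length + 1 ≤ _; simp [SimpleGraph.Walk.length_cons]; omega⟩

/-- In `G`, `dist u y ≤ dist u x` when `u ≠ x` and `y` dominates `x`. -/
lemma corner_dist_le {V : Type*} (G : SimpleGraph V) (x y : V)
    (hG : G.Connected) (hxy : G.Adj x y)
    (hdom : insert x (G.neighborSet x) ⊆ insert y (G.neighborSet y))
    (u : V) (hu : u ≠ x) : G.dist u y ≤ G.dist u x := by
  obtain ⟨w, hw⟩ := (hG.preconnected x u).exists_walk_length_eq_dist
  cases w with
  | nil => exact absurd rfl hu.symm
  | @cons _ p _ h q =>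
    -- h : G.Adj x p, q : G.Walk p u
    have hpN : p ∈ insert y (G.neighborSet y) := hdom (Or.inr h)
    rw [SimpleGraph.Walk.length_cons] at hw
    rw [SimpleGraph.dist_comm (u := u) (v := y), SimpleGraph.dist_comm (u := u) (v := x)]
    rcases hpN with hp | hp
    · -- p = y
      subst hp
      calc G.dist p u ≤ q.length := SimpleGraph.dist_le q
        _ ≤ G.dist x u := by omega
    · -- G.Adj y p
      calc G.dist y u ≤ (SimpleGraph.Walk.cons hp q).length := SimpleGraph.dist_le _
        _ = q.length + 1 := SimpleGraph.Walk.length_cons _ _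
        _ = G.dist x u := hw

theorem helly_corner_deletion {V : Type*} [Fintype V] (G : SimpleGraph V)
    (hG : G.Connected) (hHelly : IsHellyGraph G) (x : V) (hx : IsGraphCorner G x) :
    (G.induce {y | y ≠ x}).Connected ∧ IsHellyGraph (G.induce {y | y ≠ x}) := by
  obtain ⟨y, hxy, hdom⟩ := hx
  set S : Set V := {y | y ≠ x} with hS
  have hyS : y ∈ S := hxy.ne'
  -- distance in the induced graph is at most distance in G
  have hdist_le : ∀ (u v : S), (G.induce S).dist u v ≤ G.dist u.1 v.1 := by
    rintro ⟨u, hu⟩ ⟨v, hv⟩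
    obtain ⟨w, hw⟩ := (hG.preconnected u v).exists_walk_length_eq_dist
    obtain ⟨w', hw'⟩ := walk_transfer G x y hxy hdom w.length u v hu hv w le_rfl
    calc (G.induce S).dist ⟨u, hu⟩ ⟨v, hv⟩ ≤ w'.length := SimpleGraph.dist_le w'
      _ ≤ w.length := hw'
      _ = G.dist u v := hw
  -- connectedness
  have hconn : (G.induce S).Connected := by
    rw [SimpleGraph.connected_iff]
    refine ⟨?_, ⟨⟨y, hyS⟩⟩⟩
    rintro ⟨u, hu⟩ ⟨v, hv⟩
    obtain ⟨w, _⟩ := (hG.preconnected u v).exists_walk_length_eq_dist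
    obtain ⟨w', _⟩ := walk_transfer G x y hxy hdom w.length u v hu hv w le_rfl
    exact ⟨w'⟩
  -- distance in G is at most distance in the induced graph
  have hdist_ge : ∀ (u v : S), G.dist u.1 v.1 ≤ (G.induce S).dist u v := by
    intro u v
    obtain ⟨w, hw⟩ := (hconn.preconnected u v).exists_walk_length_eq_dist
    calc G.dist u.1 v.1 ≤ (w.map (SimpleGraph.Embedding.induce S).toHom).length :=
          SimpleGraph.dist_le _
      _ = w.length := SimpleGraph.Walk.length_map _ _
      _ = (G.induce S).dist u v := hw
  have hdist_eq : ∀ (u v : S), (G.induce S).dist u v = G.dist u.1 v.1 :=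
    fun u v => le_antisymm (hdist_le u v) (hdist_ge u v)
  refine ⟨hconn, ?_⟩
  intro s hs hpair
  set s' : Set (V × ℕ) := (fun p : S × ℕ => ((p.1 : V), p.2)) '' s with hs'
  have hs'ne : s'.Nonempty := hs.image _
  have hpair' : ∀ p ∈ s', ∀ q ∈ s', ∃ w, G.dist p.1 w ≤ p.2 ∧ G.dist q.1 w ≤ q.2 := by
    rintro _ ⟨p, hp, rfl⟩ _ ⟨q, hq, rfl⟩
    obtain ⟨w, hw1, hw2⟩ := hpair p hp q hq
    exact ⟨w.1, by rw [← hdist_eq]; exact hw1, by rw [← hdist_eq]; exact hw2⟩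
  obtain ⟨w, hw⟩ := hHelly s' hs'ne hpair'
  by_cases hwx : w = x
  · subst hwx
    refine ⟨⟨y, hyS⟩, ?_⟩
    intro p hp
    rw [hdist_eq]
    calc G.dist p.1.1 y ≤ G.dist p.1.1 w := corner_dist_le G w y hG hxy hdom p.1.1 p.1.2
      _ ≤ p.2 := hw (p.1.1, p.2) ⟨p, hp, rfl⟩
  · refine ⟨⟨w, hwx⟩, ?_⟩
    intro p hp
    rw [hdist_eq]
    exact hw (p.1.1, p.2) ⟨p, hp, rfl⟩
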